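/- arXiv:1512.02714 — 5 statements merged into one kernel-verified Lean document; each statement's English description precedes it below -/
import Mathlib

section
/- For a walk W = v_0, v_1, …, v_k on an uncertain graph 𝒢, the walk probability factorizes over the distinct vertices of W: Pr_𝒢(X_1 = v_1, …, X_k = v_k | X_0 = v_0) = ∏_{v ∈ V(W)} α_W(v), where α_W(v) = Σ_{G : O_W(v) ⊆ O_G(v)} Pr(𝒢 ⇒ G) · inv(|O_G(v)|)^{c_W(v)}. -/
variable {V : Type*} [DecidableEq V]
variable {V : Type*} [DecidableEq V]

/-- The out-neighborhood of `u` in the possible world with edge set `G`. -/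
def outN (G : Finset (V × V)) (u : V) : Finset V :=
  (G.filter (fun e => e.1 = u)).image Prod.snd

/-- One-step transition probability of the random walk on the deterministic
graph with edge set `G`. -/
noncomputable def stepPr (G : Finset (V × V)) (u v : V) : ℝ :=
  if (u, v) ∈ G then 1 / (outN G u).card else 0

/-- Probability that the random walk on `G` started at `vs 0` visits
`vs 1, …, vs k` at times `1, …, k`. -/
noncomputable def walkPr (G : Finset (V × V)) (vs : ℕ → V) (k : ℕ) : ℝ :=
  ∏ i ∈ Finset.range k, stepPr G (vs i) (vs (i + 1))

/-- Probability `Pr(𝒢 ⇒ G)` of the possible world `G` of the uncertain graph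
with edge set `E` and edge probabilities `P`. -/
noncomputable def worldPr (E : Finset (V × V)) (P : V × V → ℝ)
    (G : Finset (V × V)) : ℝ :=
  (∏ e ∈ G, P e) * ∏ e ∈ E \ G, (1 - P e)

/-- The set of distinct vertices of the walk `vs 0, …, vs k`. -/
def VW (vs : ℕ → V) (k : ℕ) : Finset V := (Finset.range (k + 1)).image vs

/-- The set `O_W(v)` of out-neighbors of `v` used by the walk. -/
def OW (vs : ℕ → V) (k : ℕ) (v : V) : Finset V :=
  ((Finset.range k).filter (fun i => vs i = v)).image (fun i => vs (i + 1))

/-- The number `c_W(v)` of transitions of the walk leaving `v`. -/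
def cW (vs : ℕ → V) (k : ℕ) (v : V) : ℕ :=
  ((Finset.range k).filter (fun i => vs i = v)).card

/-- `inv x = 1/x` for `x ≠ 0`, and `inv 0 = 1`. -/
noncomputable def invR (x : ℕ) : ℝ := if x = 0 then 1 else 1 / x

/-- The factor `α_W(v)`: expectation of `inv(|O_G(v)|)^{c_W(v)}` over the
possible worlds `G` containing all arcs from `v` used by the walk. -/
noncomputable def alphaW (E : Finset (V × V)) (P : V × V → ℝ)
    (vs : ℕ → V) (k : ℕ) (v : V) : ℝ :=
  ∑ G ∈ E.powerset.filter (fun G => OW vs k v ⊆ outN G v),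
    worldPr E P G * (invR (outN G v).card) ^ (cW vs k v)

section Aux
variable {V : Type*} [DecidableEq V]

lemma mem_outN {G : Finset (V × V)} {u w : V} : w ∈ outN G u ↔ (u, w) ∈ G := by
  simp only [outN, Finset.mem_image, Finset.mem_filter]
  constructor
  · rintro ⟨⟨a, b⟩, ⟨hG, h1⟩, h2⟩
    simp only at h1 h2; subst h1; subst h2; exact hG
  · intro h; exact ⟨(u, w), ⟨h, rfl⟩, rfl⟩

lemma outN_filter (G : Finset (V × V)) (v : V) :
    outN (G.filter (fun e => e.1 = v)) v = outN G v := by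
  unfold outN
  rw [Finset.filter_filter]
  congr 1
  apply Finset.filter_congr
  intro x _; simp

lemma sum_worldPr (E : Finset (V × V)) (P : V × V → ℝ) :
    ∑ G ∈ E.powerset, worldPr E P G = 1 := by
  unfold worldPr
  rw [← Finset.prod_add]
  simp

lemma sum_powerset_union {α : Type*} [DecidableEq α] {E₁ E₂ : Finset α}
    (h : Disjoint E₁ E₂) (F : Finset α → ℝ) :
    ∑ G ∈ (E₁ ∪ E₂).powerset, F G =
      ∑ A ∈ E₁.powerset, ∑ B ∈ E₂.powerset, F (A ∪ B) := by
  rw [← Finset.sum_product' (f := fun A B => F (A ∪ B))]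
  refine Finset.sum_nbij' (fun G => (G ∩ E₁, G ∩ E₂)) (fun p => p.1 ∪ p.2) ?_ ?_ ?_ ?_ ?_
  · intro G hG
    simp only [Finset.mem_product, Finset.mem_powerset]
    exact ⟨Finset.inter_subset_right, Finset.inter_subset_right⟩
  · intro p hp
    simp only [Finset.mem_product, Finset.mem_powerset] at hp
    exact Finset.mem_powerset.mpr (Finset.union_subset_union hp.1 hp.2)
  · intro G hG
    simp only
    rw [← Finset.inter_union_distrib_left, Finset.inter_eq_left.mpr (Finset.mem_powerset.mp hG)]
  · intro p hp
    simp only [Finset.mem_product, Finset.mem_powerset] at hp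
    have h12 : p.1 ∩ E₂ = ∅ := Finset.disjoint_iff_inter_eq_empty.mp
      (Finset.disjoint_of_subset_left hp.1 h)
    have h21 : p.2 ∩ E₁ = ∅ := Finset.disjoint_iff_inter_eq_empty.mp
      (Finset.disjoint_of_subset_left hp.2 h.symm)
    have e1 : (p.1 ∪ p.2) ∩ E₁ = p.1 := by
      rw [Finset.union_inter_distrib_right, Finset.inter_eq_left.mpr hp.1, h21,
        Finset.union_empty]
    have e2 : (p.1 ∪ p.2) ∩ E₂ = p.2 := by
      rw [Finset.union_inter_distrib_right, Finset.inter_eq_left.mpr hp.2, h12,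
        Finset.empty_union]
    simp only [e1, e2]
  · intro G hG
    simp only
    rw [← Finset.inter_union_distrib_left, Finset.inter_eq_left.mpr (Finset.mem_powerset.mp hG)]

lemma worldPr_union {E₁ E₂ G₁ G₂ : Finset (V × V)} (P : V × V → ℝ)
    (hd : Disjoint E₁ E₂) (h1 : G₁ ⊆ E₁) (h2 : G₂ ⊆ E₂) :
    worldPr (E₁ ∪ E₂) P (G₁ ∪ G₂) = worldPr E₁ P G₁ * worldPr E₂ P G₂ := by
  have hdG : Disjoint G₁ G₂ := Finset.disjoint_of_subset_left h1
    (Finset.disjoint_of_subset_right h2 hd)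
  have hsd : (E₁ ∪ E₂) \ (G₁ ∪ G₂) = (E₁ \ G₁) ∪ (E₂ \ G₂) := by
    ext e
    have he1 : e ∈ E₁ → e ∉ E₂ := fun h => Finset.disjoint_left.mp hd h
    have hg1 : e ∈ G₁ → e ∈ E₁ := fun h => h1 h
    have hg2 : e ∈ G₂ → e ∈ E₂ := fun h => h2 h
    simp only [Finset.mem_sdiff, Finset.mem_union]
    tauto
  unfold worldPr
  rw [hsd, Finset.prod_union hdG, Finset.prod_union (Finset.disjoint_of_subset_left
    (Finset.sdiff_subset) (Finset.disjoint_of_subset_right (Finset.sdiff_subset) hd))]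
  ring

/-- If `h` depends only on the `E₁`-part of the world, the expectation over worlds
of `E₁ ∪ E₂` reduces to the expectation over worlds of `E₁`. -/
lemma sum_worldPr_mul {E₁ E₂ : Finset (V × V)} (P : V × V → ℝ)
    (hd : Disjoint E₁ E₂) (h : Finset (V × V) → ℝ)
    (hh : ∀ A ∈ E₁.powerset, ∀ B ∈ E₂.powerset, h (A ∪ B) = h A) :
    ∑ G ∈ (E₁ ∪ E₂).powerset, worldPr (E₁ ∪ E₂) P G * h G =
      ∑ A ∈ E₁.powerset, worldPr E₁ P A * h A := by
  rw [sum_powerset_union hd]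
  have : ∀ A ∈ E₁.powerset, ∑ B ∈ E₂.powerset,
      worldPr (E₁ ∪ E₂) P (A ∪ B) * h (A ∪ B) = worldPr E₁ P A * h A := by
    intro A hA
    have hA' := Finset.mem_powerset.mp hA
    calc ∑ B ∈ E₂.powerset, worldPr (E₁ ∪ E₂) P (A ∪ B) * h (A ∪ B)
        = ∑ B ∈ E₂.powerset, worldPr E₁ P A * h A * worldPr E₂ P B := by
          apply Finset.sum_congr rfl
          intro B hB
          rw [worldPr_union P hd hA' (Finset.mem_powerset.mp hB), hh A hA B hB]
          ring
      _ = worldPr E₁ P A * h A := by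
          rw [← Finset.mul_sum, sum_worldPr, mul_one]
  exact Finset.sum_congr rfl this

/-- Independence: expectation of a product of functions of disjoint edge-fibers
factorizes. -/
lemma indep (E : Finset (V × V)) (P : V × V → ℝ) (T : Finset V)
    (g : V → Finset (V × V) → ℝ) :
    ∑ G ∈ E.powerset, worldPr E P G * ∏ v ∈ T, g v (G.filter (fun e => e.1 = v)) =
      ∏ v ∈ T, ∑ G ∈ E.powerset, worldPr E P G * g v (G.filter (fun e => e.1 = v)) := by
  induction T using Finset.induction_on generalizing E with
  | empty => simp [sum_worldPr]
  | @insert v T hv ih =>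
    set E₁ := E.filter (fun e => e.1 = v) with hE₁
    set E₂ := E.filter (fun e => ¬ e.1 = v) with hE₂
    have hE : E₁ ∪ E₂ = E := Finset.filter_union_filter_not_eq _ E
    have hd : Disjoint E₁ E₂ := Finset.disjoint_filter_filter_not E E _
    -- fiber facts
    have fib_v : ∀ A ∈ E₁.powerset, ∀ B ∈ E₂.powerset,
        (A ∪ B).filter (fun e => e.1 = v) = A := by
      intro A hA B hB
      rw [Finset.filter_union]
      rw [Finset.filter_true_of_mem (fun e he => by
        have := Finset.mem_powerset.mp hA he; exact (Finset.mem_filter.mp this).2),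
        Finset.filter_false_of_mem (fun e he => by
        have := Finset.mem_powerset.mp hB he; exact (Finset.mem_filter.mp this).2),
        Finset.union_empty]
    have fib_u : ∀ u, u ≠ v → ∀ A ∈ E₁.powerset, ∀ B ∈ E₂.powerset,
        (A ∪ B).filter (fun e => e.1 = u) = B.filter (fun e => e.1 = u) := by
      intro u hu A hA B hB
      rw [Finset.filter_union]
      rw [Finset.filter_false_of_mem (fun e he => by
        have h1 := (Finset.mem_filter.mp (Finset.mem_powerset.mp hA he)).2
        rw [h1]; exact fun h => hu h.symm), Finset.empty_union]
    -- expand both sides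
    rw [← hE, sum_powerset_union hd]
    rw [Finset.prod_insert hv]
    have key : ∀ A ∈ E₁.powerset, ∀ B ∈ E₂.powerset,
        worldPr (E₁ ∪ E₂) P (A ∪ B) *
          ∏ u ∈ insert v T, g u ((A ∪ B).filter (fun e => e.1 = u)) =
        (worldPr E₁ P A * g v A) *
          (worldPr E₂ P B * ∏ u ∈ T, g u (B.filter (fun e => e.1 = u))) := by
      intro A hA B hB
      rw [worldPr_union P hd (Finset.mem_powerset.mp hA) (Finset.mem_powerset.mp hB),
        Finset.prod_insert hv, fib_v A hA B hB]
      have : ∀ u ∈ T, g u ((A ∪ B).filter (fun e => e.1 = u)) =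
          g u (B.filter (fun e => e.1 = u)) := by
        intro u hu
        rw [fib_u u (fun h => hv (h ▸ hu)) A hA B hB]
      rw [Finset.prod_congr rfl this]
      ring
    calc ∑ A ∈ E₁.powerset, ∑ B ∈ E₂.powerset,
          worldPr (E₁ ∪ E₂) P (A ∪ B) *
            ∏ u ∈ insert v T, g u ((A ∪ B).filter (fun e => e.1 = u))
        = ∑ A ∈ E₁.powerset, ∑ B ∈ E₂.powerset,
            (worldPr E₁ P A * g v A) *
              (worldPr E₂ P B * ∏ u ∈ T, g u (B.filter (fun e => e.1 = u))) := by
          exact Finset.sum_congr rfl fun A hA => Finset.sum_congr rfl fun B hB => key A hA B hB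
      _ = (∑ A ∈ E₁.powerset, worldPr E₁ P A * g v A) *
            (∑ B ∈ E₂.powerset, worldPr E₂ P B *
              ∏ u ∈ T, g u (B.filter (fun e => e.1 = u))) := by
          rw [Finset.sum_mul_sum]
      _ = (∑ G ∈ (E₁ ∪ E₂).powerset, worldPr (E₁ ∪ E₂) P G *
              g v (G.filter (fun e => e.1 = v))) *
            ∏ u ∈ T, ∑ G ∈ (E₁ ∪ E₂).powerset, worldPr (E₁ ∪ E₂) P G *
              g u (G.filter (fun e => e.1 = u)) := by
          congr 1
          · rw [sum_worldPr_mul P hd _ (fun A hA B hB => by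
              rw [fib_v A hA B hB,
                Finset.filter_true_of_mem (fun e he =>
                  (Finset.mem_filter.mp (Finset.mem_powerset.mp hA he)).2)])]
            apply Finset.sum_congr rfl
            intro A hA
            rw [Finset.filter_true_of_mem (fun e he =>
              (Finset.mem_filter.mp (Finset.mem_powerset.mp hA he)).2)]
          · rw [ih E₂]
            apply Finset.prod_congr rfl
            intro u hu
            rw [Finset.union_comm,
              sum_worldPr_mul P hd.symm (fun G => g u (G.filter (fun e => e.1 = u)))
                (fun B hB A hA => by
                  rw [Finset.union_comm, fib_u u (fun h => hv (h ▸ hu)) A hA B hB])]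
end Aux

lemma inner_prod (G : Finset (V × V)) (vs : ℕ → V) (k : ℕ) (v : V) :
    ∏ i ∈ (Finset.range k).filter (fun i => vs i = v), stepPr G (vs i) (vs (i + 1)) =
      if OW vs k v ⊆ outN G v then invR (outN G v).card ^ cW vs k v else 0 := by
  have hstep : ∀ i ∈ (Finset.range k).filter (fun i => vs i = v),
      stepPr G (vs i) (vs (i + 1)) =
        if vs (i + 1) ∈ outN G v then 1 / ((outN G v).card : ℝ) else 0 := by
    intro i hi
    have hv := (Finset.mem_filter.mp hi).2
    rw [stepPr, hv]
    congr 1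
    · simp [mem_outN]
  rw [Finset.prod_congr rfl hstep]
  by_cases hsub : OW vs k v ⊆ outN G v
  · rw [if_pos hsub]
    have hmem : ∀ i ∈ (Finset.range k).filter (fun i => vs i = v),
        vs (i + 1) ∈ outN G v := by
      intro i hi
      exact hsub (Finset.mem_image.mpr ⟨i, hi, rfl⟩)
    rw [Finset.prod_congr rfl (fun i hi => if_pos (hmem i hi)), Finset.prod_const]
    rcases Nat.eq_zero_or_pos (cW vs k v) with h0 | hpos
    · rw [cW] at h0
      rw [h0, cW, h0, pow_zero, pow_zero]
    · have hne : ((Finset.range k).filter (fun i => vs i = v)).Nonempty :=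
        Finset.card_pos.mp hpos
      obtain ⟨i, hi⟩ := hne
      have : vs (i + 1) ∈ outN G v := hmem i hi
      have hcard : (outN G v).card ≠ 0 :=
        Finset.card_ne_zero_of_mem this
      rw [invR, if_neg hcard, cW]
  · rw [if_neg hsub]
    obtain ⟨w, hw, hw'⟩ := Finset.not_subset.mp hsub
    obtain ⟨i, hi, rfl⟩ := Finset.mem_image.mp hw
    exact Finset.prod_eq_zero hi (if_neg hw')



/-- the walk probability on an uncertain graph factorizes over
the distinct vertices of the walk:
`Pr_𝒢(X_1 = v_1, …, X_k = v_k | X_0 = v_0) = ∏_{v ∈ V(W)} α_W(v)`. -/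
theorem walkPr_eq_prod_alpha (E : Finset (V × V)) (P : V × V → ℝ)
    (hP : ∀ e ∈ E, 0 < P e ∧ P e ≤ 1)
    (vs : ℕ → V) (k : ℕ)
    (hwalk : ∀ i < k, (vs i, vs (i + 1)) ∈ E) :
    ∑ G ∈ E.powerset, worldPr E P G * walkPr G vs k =
    ∏ v ∈ VW vs k, alphaW E P vs k v := by
  classical
  set g : V → Finset (V × V) → ℝ := fun v S =>
    if OW vs k v ⊆ outN S v then invR (outN S v).card ^ cW vs k v else 0 with hg
  have hwalkPr : ∀ G : Finset (V × V),
      walkPr G vs k = ∏ v ∈ VW vs k, g v (G.filter (fun e => e.1 = v)) := by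
    intro G
    rw [walkPr, ← Finset.prod_fiberwise_of_maps_to (t := VW vs k) (g := vs)
      (fun i hi => Finset.mem_image.mpr
        ⟨i, Finset.mem_range.mpr (Nat.lt_succ_of_lt (Finset.mem_range.mp hi)), rfl⟩)
      (fun i => stepPr G (vs i) (vs (i + 1)))]
    apply Finset.prod_congr rfl
    intro v _
    rw [inner_prod, hg]
    simp only [outN_filter]
  have halpha : ∀ v, alphaW E P vs k v =
      ∑ G ∈ E.powerset, worldPr E P G * g v (G.filter (fun e => e.1 = v)) := by
    intro v
    rw [alphaW, Finset.sum_filter]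
    apply Finset.sum_congr rfl
    intro G _
    rw [hg]
    simp only [outN_filter]
    rw [mul_ite, mul_zero]
  calc ∑ G ∈ E.powerset, worldPr E P G * walkPr G vs k
      = ∑ G ∈ E.powerset, worldPr E P G * ∏ v ∈ VW vs k,
          g v (G.filter (fun e => e.1 = v)) := by
        exact Finset.sum_congr rfl fun G _ => by rw [hwalkPr G]
    _ = ∏ v ∈ VW vs k, ∑ G ∈ E.powerset, worldPr E P G *
          g v (G.filter (fun e => e.1 = v)) := indep E P (VW vs k) g
    _ = ∏ v ∈ VW vs k, alphaW E P vs k v :=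
        Finset.prod_congr rfl fun v _ => (halpha v).symm
end

section
/- For a deterministic directed graph, the n-th iterative SimRank matrix S^(n), defined by S^(0) = I and S^(n) = c·Aᵀ·S^(n−1)·A + (1−c)·I, satisfies the closed form S^(n) = c^n·(W^(n))ᵀ·W^(n) + (1−c)·Σ_{k=0}^{n−1} c^k·(W^(k))ᵀ·W^(k), where W^(k) = A^k and W^(0) = I. -/
open Matrix

/-- closed form of the iterative SimRank matrices.  If
`S 0 = I` and `S (m+1) = c • Aᵀ S m A + (1-c) • I`, then
`S n = c^n • (Aⁿ)ᵀ Aⁿ + (1-c) • Σ_{k<n} c^k • (Aᵏ)ᵀ Aᵏ`. -/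
theorem simrank_closed_form {d : ℕ} (A : Matrix (Fin d) (Fin d) ℝ)
    (c : ℝ) (hc0 : 0 < c) (hc1 : c < 1)
    (S : ℕ → Matrix (Fin d) (Fin d) ℝ)
    (hS0 : S 0 = 1)
    (hSrec : ∀ m, S (m + 1) = c • (Aᵀ * S m * A) + (1 - c) • 1)
    (n : ℕ) :
    S n = c ^ n • ((A ^ n)ᵀ * A ^ n) +
      (1 - c) • ∑ k ∈ Finset.range n, c ^ k • ((A ^ k)ᵀ * A ^ k) := by
  induction n with
  | zero => simp [hS0]
  | succ n ih =>
    have key : ∀ k : ℕ, Aᵀ * ((A ^ k)ᵀ * A ^ k) * A = (A ^ (k+1))ᵀ * A ^ (k+1) := by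
      intro k
      rw [pow_succ, transpose_mul]
      noncomm_ring
    rw [hSrec, ih, Finset.sum_range_succ' _ n]
    simp only [pow_succ, pow_zero, one_smul, Matrix.transpose_one, Matrix.one_mul,
      Matrix.mul_add, Matrix.add_mul, Matrix.mul_smul, Matrix.smul_mul, smul_add,
      Finset.mul_sum, Finset.sum_mul, Finset.smul_sum, key, smul_smul]
    have h1 : (c * c ^ n) = (c ^ n * c) := by ring
    have h2 : ∀ x : ℕ, (c * ((1 - c) * c ^ x)) = ((1 - c) * (c ^ x * c)) := by
      intro x; ring
    simp only [h1, h2]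
    abel
end

section
/- The sequence of iterative SimRank matrices S^(n) with S^(0) = I and S^(n) = c·Aᵀ·S^(n−1)·A + (1−c)·I converges entrywise as n → ∞, provided every entry of (A^k)ᵀ A^k is bounded by 1 (e.g., when A is column-stochastic or column-substochastic); moreover the limit S satisfies S = c·Aᵀ·S·A + (1−c)·I. -/
open Matrix Filter

attribute [local instance] Matrix.normedAddCommGroup Matrix.normedSpace

/-- entrywise convergence of the iterative SimRank matrices.
If `S 0 = I`, `S (m+1) = c • Aᵀ S m A + (1-c) • I`, and every entry of
`(Aᵏ)ᵀ Aᵏ` is bounded by `1` (e.g. for a column-substochastic `A`), then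
`S n` converges entrywise to a matrix `S` satisfying
`S = c • Aᵀ S A + (1-c) • I`. -/
theorem simrank_converges {d : ℕ} (A : Matrix (Fin d) (Fin d) ℝ)
    (c : ℝ) (hc0 : 0 < c) (hc1 : c < 1)
    (hbound : ∀ (k : ℕ) (i j : Fin d), |((A ^ k)ᵀ * A ^ k) i j| ≤ 1)
    (S : ℕ → Matrix (Fin d) (Fin d) ℝ)
    (hS0 : S 0 = 1)
    (hSrec : ∀ m, S (m + 1) = c • (Aᵀ * S m * A) + (1 - c) • 1) :
    ∃ L : Matrix (Fin d) (Fin d) ℝ,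
      (∀ i j : Fin d, Tendsto (fun n => S n i j) atTop (nhds (L i j))) ∧
      L = c • (Aᵀ * L * A) + (1 - c) • 1 := by
  set B : ℕ → Matrix (Fin d) (Fin d) ℝ := fun k => (A ^ k)ᵀ * A ^ k with hBdef
  have hB0 : B 0 = 1 := by simp [hBdef]
  have hBsucc : ∀ k, Aᵀ * B k * A = B (k + 1) := by
    intro k
    simp only [hBdef]
    rw [pow_succ, Matrix.transpose_mul]
    noncomm_ring
  have hBnorm : ∀ k, ‖B k‖ ≤ 1 := by
    intro k
    rw [Matrix.norm_le_iff zero_le_one]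
    intro i j
    exact hbound k i j
  set f : ℕ → Matrix (Fin d) (Fin d) ℝ := fun k => ((1 - c) * c ^ k) • B k with hfdef
  have hc0' : (0:ℝ) ≤ c := le_of_lt hc0
  have hc1' : (0:ℝ) ≤ 1 - c := by linarith
  have hsum : Summable f := by
    apply Summable.of_norm
    apply Summable.of_nonneg_of_le (fun k => norm_nonneg _) (fun k => ?_)
      ((summable_geometric_of_lt_one hc0' hc1).mul_left (1 - c))
    rw [hfdef, norm_smul]
    have h1 : ‖(1 - c) * c ^ k‖ = (1 - c) * c ^ k := by
      rw [Real.norm_eq_abs, abs_of_nonneg (by positivity)]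
    rw [h1]
    calc (1 - c) * c ^ k * ‖B k‖ ≤ (1 - c) * c ^ k * 1 := by
          apply mul_le_mul_of_nonneg_left (hBnorm k) (by positivity)
      _ = (1 - c) * c ^ k := by ring
  obtain ⟨L, hL⟩ := hsum
  -- closed form
  have hclosed : ∀ n, S n = c ^ n • B n + ∑ k ∈ Finset.range n, f k := by
    intro n
    induction n with
    | zero => simp [hS0, hB0]
    | succ n ih =>
      rw [hSrec n, ih]
      have expand : Aᵀ * (c ^ n • B n + ∑ k ∈ Finset.range n, f k) * A
          = c ^ n • B (n + 1) + ∑ k ∈ Finset.range n, ((1 - c) * c ^ k) • B (k + 1) := by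
        rw [Matrix.mul_add, Matrix.add_mul]
        congr 1
        · rw [Matrix.mul_smul, Matrix.smul_mul, hBsucc]
        · rw [Matrix.mul_sum, Matrix.sum_mul]
          apply Finset.sum_congr rfl
          intro k _
          rw [hfdef]
          simp only
          rw [Matrix.mul_smul, Matrix.smul_mul, hBsucc]
      rw [expand, smul_add, Finset.sum_range_succ']
      have hf0 : f 0 = (1 - c) • 1 := by simp [hfdef, hB0]
      rw [hf0, smul_smul, Finset.smul_sum]
      have : ∀ k, c • (((1 - c) * c ^ k) • B (k + 1)) = f (k + 1) := by
        intro k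
        rw [hfdef, smul_smul]
        congr 1
        ring
      simp only [this]
      rw [← pow_succ']
      abel
  refine ⟨L, ?_, ?_⟩
  · intro i j
    have hev : Continuous (fun M : Matrix (Fin d) (Fin d) ℝ => M i j) :=
      (continuous_apply j).comp (continuous_apply i)
    have h2 : Tendsto (fun n => (∑ k ∈ Finset.range n, f k) i j) atTop (nhds (L i j)) :=
      (hev.tendsto L).comp hL.tendsto_sum_nat
    have h1 : Tendsto (fun n => (c ^ n • B n) i j) atTop (nhds 0) := by
      apply squeeze_zero_norm (f := fun n => (c ^ n • B n) i j) (a := fun n => c ^ n)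
      · intro n
        simp only [Matrix.smul_apply, smul_eq_mul, Real.norm_eq_abs, abs_mul,
          abs_of_nonneg (pow_nonneg hc0' n)]
        calc c ^ n * |B n i j| ≤ c ^ n * 1 := by
              apply mul_le_mul_of_nonneg_left _ (by positivity)
              simpa [hBdef] using hbound n i j
          _ = c ^ n := by ring
      · exact tendsto_pow_atTop_nhds_zero_of_lt_one hc0' hc1
    have := h1.add h2
    rw [zero_add] at this
    apply this.congr
    intro n
    rw [hclosed n]
    simp [Matrix.add_apply]
  · -- fixed point equation
    let Tl : Matrix (Fin d) (Fin d) ℝ →ₗ[ℝ] Matrix (Fin d) (Fin d) ℝ :=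
      { toFun := fun M => Aᵀ * M * A
        map_add' := fun M N => by
          show Aᵀ * (M + N) * A = Aᵀ * M * A + Aᵀ * N * A
          rw [Matrix.mul_add, Matrix.add_mul]
        map_smul' := fun r M => by
          show Aᵀ * (r • M) * A = r • (Aᵀ * M * A)
          rw [Matrix.mul_smul, Matrix.smul_mul] }
    let T : Matrix (Fin d) (Fin d) ℝ →L[ℝ] Matrix (Fin d) (Fin d) ℝ :=
      { toLinearMap := Tl, cont := Tl.continuous_of_finiteDimensional }
    have hTL : HasSum (fun k => T (f k)) (T L) := T.hasSum hL
    have hTf : ∀ k, c • T (f k) = f (k + 1) := by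
      intro k
      show c • (Aᵀ * (((1 - c) * c ^ k) • B k) * A) = f (k + 1)
      rw [Matrix.mul_smul, Matrix.smul_mul, hBsucc, smul_smul, hfdef]
      simp only
      congr 1
      ring
    have hshift : HasSum (fun k => f (k + 1)) (L - f 0) := by
      have := (hasSum_nat_add_iff' 1).2 hL
      simpa using this
    have hc : HasSum (fun k => c • T (f k)) (c • T L) := hTL.const_smul c
    simp only [hTf] at hc
    have heq : c • T L = L - f 0 := hc.unique hshift
    have hf0 : f 0 = (1 - c) • 1 := by simp [hfdef, hB0]
    have : c • (Aᵀ * L * A) = L - (1 - c) • 1 := by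
      rw [← hf0, ← heq]; rfl
    rw [this]
    abel
end

section
/- For the n-th SimRank similarity on an uncertain graph, |s_𝒢^(n)(u, v) − s_𝒢(u, v)| ≤ c^{n+1} for all n ≥ 1, where s_𝒢(u,v) = lim_{m→∞} s_𝒢^(m)(u,v). -/
open Filter

/-- `|s^(n) − s| ≤ c^(n+1)` for all `n ≥ 1`, where
`s^(n) = c^n·m^(n) + (1−c)·Σ_{k<n} c^k·m^(k)` with meeting probabilities
`m^(k) ∈ [0,1]`, and `s` is the limit of `s^(n)`. -/
theorem simrank_partial_error_bound (c : ℝ) (hc0 : 0 < c) (hc1 : c < 1)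
    (m : ℕ → ℝ) (hm : ∀ k, 0 ≤ m k ∧ m k ≤ 1)
    (s : ℕ → ℝ)
    (hs : ∀ n, s n = c ^ n * m n + (1 - c) * ∑ k ∈ Finset.range n, c ^ k * m k)
    (L : ℝ) (hL : Tendsto s atTop (nhds L)) :
    ∀ n, 1 ≤ n → |s n - L| ≤ c ^ (n + 1) := by
  intro n _
  have hkey : ∀ N, n ≤ N → |s N - s n| ≤ c ^ (n + 1) := by
    intro N hN
    rcases eq_or_lt_of_le hN with rfl | hlt
    · simp [abs_of_nonneg, (pow_pos hc0 (n+1)).le]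
    · have hsum : ∑ k ∈ Finset.range N, c ^ k * m k - ∑ k ∈ Finset.range n, c ^ k * m k
          = c ^ n * m n + ∑ k ∈ Finset.Ico (n+1) N, c ^ k * m k := by
        rw [← Finset.sum_Ico_eq_sub _ hN, Finset.sum_eq_sum_Ico_succ_bot hlt]
      have hD : s N - s n = c ^ N * m N - c ^ (n+1) * m n
          + (1 - c) * ∑ k ∈ Finset.Ico (n+1) N, c ^ k * m k := by
        rw [hs, hs]; linear_combination (1 - c) * hsum
      have hgeo : (1 - c) * ∑ k ∈ Finset.Ico (n+1) N, c ^ k = c ^ (n+1) - c ^ N := by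
        have hne : c - 1 ≠ 0 := by linarith
        rw [geom_sum_Ico hc1.ne hlt]
        field_simp
        ring
      have hsum_nonneg : 0 ≤ ∑ k ∈ Finset.Ico (n+1) N, c ^ k * m k :=
        Finset.sum_nonneg fun k _ => mul_nonneg (pow_pos hc0 k).le (hm k).1
      have hsum_le : ∑ k ∈ Finset.Ico (n+1) N, c ^ k * m k
          ≤ ∑ k ∈ Finset.Ico (n+1) N, c ^ k :=
        Finset.sum_le_sum fun k _ => by
          nlinarith [(hm k).2, (pow_pos hc0 k).le]
      have h1c : 0 < 1 - c := by linarith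
      rw [abs_le]
      constructor
      · rw [hD]
        nlinarith [(hm N).1, (hm n).2, (pow_pos hc0 N).le, (pow_pos hc0 (n+1)).le,
          mul_nonneg h1c.le hsum_nonneg]
      · rw [hD]
        nlinarith [(hm N).2, (hm n).1, (pow_pos hc0 N).le, (pow_pos hc0 (n+1)).le,
          mul_le_mul_of_nonneg_left hsum_le h1c.le]
  have htend : Tendsto (fun N => |s N - s n|) atTop (nhds |L - s n|) :=
    ((hL.sub tendsto_const_nhds).abs)
  have : |L - s n| ≤ c ^ (n + 1) :=
    le_of_tendsto htend (eventually_atTop.mpr ⟨n, hkey⟩)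
  rwa [abs_sub_comm]
end

section
/- (Propagated sampling error) Suppose for each k = 1, …, n, the estimate m̂^(k) satisfies |m^(k) − m̂^(k)| ≤ ε, with m̂^(0) = m^(0). Then the estimated SimRank ŝ^(n) = c^n·m̂^(n) + (1−c)·Σ_{k=0}^{n−1} c^k·m̂^(k) satisfies |s^(n) − ŝ^(n)| ≤ (c − c^n)·ε + c^n·ε, and in particular |s^(n) − ŝ^(n)| ≤ c·ε. -/
/-- propagated sampling error: if `m̂^(0) = m^(0)` and
`|m^(k) − m̂^(k)| ≤ ε` for `1 ≤ k ≤ n`, then the estimated SimRank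
`ŝ^(n)` satisfies `|s^(n) − ŝ^(n)| ≤ (c − c^n)·ε + c^n·ε`, and in
particular `|s^(n) − ŝ^(n)| ≤ c·ε`. -/
theorem sampling_error_propagation (c ε : ℝ) (hc0 : 0 < c) (hc1 : c < 1)
    (hε : 0 ≤ ε) (n : ℕ) (hn : 1 ≤ n)
    (m mh : ℕ → ℝ)
    (hm : ∀ k ≤ n, 0 ≤ m k ∧ m k ≤ 1)
    (hmh : ∀ k ≤ n, 0 ≤ mh k ∧ mh k ≤ 1)
    (h0 : mh 0 = m 0)
    (herr : ∀ k, 1 ≤ k → k ≤ n → |m k - mh k| ≤ ε) :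
    |(c ^ n * m n + (1 - c) * ∑ k ∈ Finset.range n, c ^ k * m k) -
      (c ^ n * mh n + (1 - c) * ∑ k ∈ Finset.range n, c ^ k * mh k)|
      ≤ (c - c ^ n) * ε + c ^ n * ε ∧
    |(c ^ n * m n + (1 - c) * ∑ k ∈ Finset.range n, c ^ k * m k) -
      (c ^ n * mh n + (1 - c) * ∑ k ∈ Finset.range n, c ^ k * mh k)|
      ≤ c * ε := by
  have hc1' : (0:ℝ) ≤ 1 - c := by linarith
  have hgeom : (1 - c) * ∑ k ∈ Finset.range n, c ^ k = 1 - c ^ n := by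
    linear_combination (-1 : ℝ) * geom_sum_mul c n
  have key : |(c ^ n * m n + (1 - c) * ∑ k ∈ Finset.range n, c ^ k * m k) -
      (c ^ n * mh n + (1 - c) * ∑ k ∈ Finset.range n, c ^ k * mh k)|
      ≤ (c - c ^ n) * ε + c ^ n * ε := by
    have heq : (c ^ n * m n + (1 - c) * ∑ k ∈ Finset.range n, c ^ k * m k) -
        (c ^ n * mh n + (1 - c) * ∑ k ∈ Finset.range n, c ^ k * mh k)
        = c ^ n * (m n - mh n)
          + (1 - c) * ∑ k ∈ Finset.range n, c ^ k * (m k - mh k) := by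
      have : ∑ k ∈ Finset.range n, c ^ k * (m k - mh k)
          = (∑ k ∈ Finset.range n, c ^ k * m k)
            - ∑ k ∈ Finset.range n, c ^ k * mh k := by
        rw [← Finset.sum_sub_distrib]
        exact Finset.sum_congr rfl (fun k _ => by ring)
      rw [this]; ring
    rw [heq]
    have h1 : |c ^ n * (m n - mh n)| ≤ c ^ n * ε := by
      rw [abs_mul, abs_of_nonneg (by positivity : (0:ℝ) ≤ c ^ n)]
      exact mul_le_mul_of_nonneg_left (herr n hn le_rfl) (by positivity)
    have h2 : |(1 - c) * ∑ k ∈ Finset.range n, c ^ k * (m k - mh k)|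
        ≤ (c - c ^ n) * ε := by
      rw [abs_mul, abs_of_nonneg hc1']
      have hsum : |∑ k ∈ Finset.range n, c ^ k * (m k - mh k)|
          ≤ ∑ k ∈ Finset.range n, (if k = 0 then 0 else c ^ k * ε) := by
        refine (Finset.abs_sum_le_sum_abs _ _).trans ?_
        apply Finset.sum_le_sum
        intro k hk
        rw [Finset.mem_range] at hk
        rcases Nat.eq_zero_or_pos k with rfl | hk1
        · simp [h0]
        · rw [if_neg (Nat.pos_iff_ne_zero.mp hk1), abs_mul,
            abs_of_nonneg (by positivity : (0:ℝ) ≤ c ^ k)]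
          exact mul_le_mul_of_nonneg_left (herr k hk1 (le_of_lt hk)) (by positivity)
      have hsum2 : ∑ k ∈ Finset.range n, (if k = 0 then 0 else c ^ k * ε)
          = (∑ k ∈ Finset.range n, c ^ k) * ε - ε := by
        have hn' : 0 ∈ Finset.range n := Finset.mem_range.mpr hn
        have hpt : ∀ k, (if k = 0 then (0:ℝ) else c ^ k * ε)
            = c ^ k * ε - (if k = 0 then c ^ k * ε else 0) := by
          intro k; split <;> simp_all
        simp_rw [hpt]
        rw [Finset.sum_sub_distrib, Finset.sum_ite_eq' (Finset.range n) 0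
          (fun k => c ^ k * ε), if_pos hn', ← Finset.sum_mul]
        simp
      calc (1 - c) * |∑ k ∈ Finset.range n, c ^ k * (m k - mh k)|
          ≤ (1 - c) * ((∑ k ∈ Finset.range n, c ^ k) * ε - ε) := by
            rw [← hsum2]; exact mul_le_mul_of_nonneg_left hsum hc1'
        _ = (c - c ^ n) * ε := by
            have : (1 - c) * ((∑ k ∈ Finset.range n, c ^ k) * ε - ε)
                = ((1 - c) * ∑ k ∈ Finset.range n, c ^ k) * ε - (1 - c) * ε := by ring
            rw [this, hgeom]; ring
    calc _ ≤ |c ^ n * (m n - mh n)|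
          + |(1 - c) * ∑ k ∈ Finset.range n, c ^ k * (m k - mh k)| := abs_add_le _ _
      _ ≤ c ^ n * ε + (c - c ^ n) * ε := add_le_add h1 h2
      _ = (c - c ^ n) * ε + c ^ n * ε := by ring
  refine ⟨key, key.trans (le_of_eq (by ring))⟩
end
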